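/- The multivariate formal power series A^c_d(u; p_1, …, p_d) := Σ_{r ≥ 1} Σ_{s ∈ ℤ_{≥0}^d} a^c_d(r;s) · u^r · p_1^{s_1}⋯p_d^{s_d} over ℚ satisfies the functional equation A^c_d = u + u·A^c_d + Δ(p)·(A^c_d + (A^c_d)²), where Δ(p) := 1 − (1−p_1)(1−p_2)⋯(1−p_d). -/

import Mathlib

namespace MultiOp

mutual
inductive Atom (d : ℕ) : Type where
  | star : Atom d
  | op : Fin d → Mon d → Atom d
inductive Mon (d : ℕ) : Type where
  | single : Atom d → Mon d
  | cons : Atom d → Mon d → Mon d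
end

mutual
def Atom.deg {d : ℕ} : Atom d → ℕ
  | .star => 1
  | .op _ v => v.deg
def Mon.deg {d : ℕ} : Mon d → ℕ
  | .single a => a.deg
  | .cons a v => a.deg + v.deg
end

mutual
def Atom.mult {d : ℕ} : Atom d → Fin d → ℕ
  | .star, _ => 0
  | .op i v, j => (if i = j then 1 else 0) + v.mult j
def Mon.mult {d : ℕ} : Mon d → Fin d → ℕ
  | .single a, j => a.mult j
  | .cons a v, j => a.mult j + v.mult j
end

noncomputable def a (d r : ℕ) (s : Fin d → ℕ) : ℕ :=
  Nat.card {v : Mon d // v.deg = r ∧ v.mult = s}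

noncomputable def b (d ℓ n : ℕ) : ℕ :=
  Nat.card {v : Mon d // ℓ * v.deg + 2 * (∑ i, v.mult i) = n}

noncomputable def A (d : ℕ) : MvPowerSeries (Option (Fin d)) ℚ :=
  fun e => (a d (e none) (fun i => e (some i)) : ℚ)

noncomputable def B (d ℓ : ℕ) : PowerSeries ℚ :=
  PowerSeries.mk fun n => (b d ℓ n : ℚ)

def narayana (n k : ℕ) : ℚ := (n.choose k * n.choose (k + 1) : ℚ) / n

/-- Concatenation (the associative multiplication) of monomials. -/
def Mon.mul {d : ℕ} : Mon d → Mon d → Mon d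
  | .single a, w => .cons a w
  | .cons a v, w => .cons a (v.mul w)

/-- Application of the unary operator `P i` to a monomial. -/
def Mon.P {d : ℕ} (i : Fin d) (v : Mon d) : Mon d := .single (.op i v)

/- Canonical monomials: along every maximal nested chain of unary operators the
operator indices are weakly increasing, i.e. a subword `P i (P j (⋯))` occurs only
when `i ≤ j`. -/
mutual
inductive AtomCanon : {d : ℕ} → Atom d → Prop where
  | star {d : ℕ} : AtomCanon (Atom.star : Atom d)
  | op {d : ℕ} (i : Fin d) (v : Mon d) : MonCanon v →
      (∀ (j : Fin d) (w : Mon d), v = Mon.single (Atom.op j w) → i ≤ j) →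
      AtomCanon (Atom.op i v)
inductive MonCanon : {d : ℕ} → Mon d → Prop where
  | single {d : ℕ} (a : Atom d) : AtomCanon a → MonCanon (Mon.single a)
  | cons {d : ℕ} (a : Atom d) (v : Mon d) : AtomCanon a → MonCanon v →
      MonCanon (Mon.cons a v)
end

/-- `a^c_d(r;s)`: the number of canonical monomials of degree `r`
and multiplicity vector `s`. -/
noncomputable def ac (d r : ℕ) (s : Fin d → ℕ) : ℕ :=
  Nat.card {v : Mon d // MonCanon v ∧ v.deg = r ∧ v.mult = s}

/-- The multigraded generating function
`A^c_d(u;p) = Σ_{r ≥ 1} Σ_{s} a^c_d(r;s) uʳ p₁^{s₁}⋯p_d^{s_d}`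
(the variable `none` is `u` and `some i` is `pᵢ`). -/
noncomputable def Ac (d : ℕ) : MvPowerSeries (Option (Fin d)) ℚ :=
  fun e => (ac d (e none) (fun i => e (some i)) : ℚ)

/-! ### Auxiliary development -/

section Aux

variable {d : ℕ}

mutual
def Atom.len {d : ℕ} : Atom d → ℕ
  | .star => 1
  | .op _ v => 1 + v.len
def Mon.len {d : ℕ} : Mon d → ℕ
  | .single a => a.len
  | .cons a v => a.len + v.len
end

theorem Atom.one_le_len : ∀ a : Atom d, 1 ≤ a.len
  | .star => le_refl 1
  | .op _ v => Nat.le_add_right 1 v.len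

theorem Mon.one_le_len : ∀ v : Mon d, 1 ≤ v.len
  | .single a => a.one_le_len
  | .cons a v => le_trans a.one_le_len (Nat.le_add_right _ _)

mutual
theorem Atom.len_eq : ∀ a : Atom d, a.len = a.deg + ∑ i, a.mult i
  | .star => by simp [Atom.len, Atom.deg, Atom.mult]
  | .op i v => by
      rw [Atom.len, Atom.deg, Mon.len_eq v]
      have : ∑ j, Atom.mult (Atom.op i v) j = 1 + ∑ j, v.mult j := by
        simp only [Atom.mult]
        rw [Finset.sum_add_distrib]
        congr 1
        simp
      omega
theorem Mon.len_eq : ∀ v : Mon d, v.len = v.deg + ∑ i, v.mult i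
  | .single a => by
      rw [Mon.len, Mon.deg, Atom.len_eq a]
      rfl
  | .cons a v => by
      rw [Mon.len, Mon.deg, Atom.len_eq a, Mon.len_eq v]
      have : ∑ j, Mon.mult (Mon.cons a v) j = (∑ j, a.mult j) + ∑ j, v.mult j := by
        simp only [Mon.mult]; rw [Finset.sum_add_distrib]
      omega
end

theorem finite_len (d : ℕ) : ∀ n : ℕ,
    {a : Atom d | a.len ≤ n}.Finite ∧ {v : Mon d | v.len ≤ n}.Finite := by
  intro n
  induction n with
  | zero =>
    constructor
    · convert Set.finite_empty
      ext a
      simp only [Set.mem_setOf_eq, Set.mem_empty_iff_false, iff_false, not_le]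
      exact a.one_le_len
    · convert Set.finite_empty
      ext v
      simp only [Set.mem_setOf_eq, Set.mem_empty_iff_false, iff_false, not_le]
      exact v.one_le_len
  | succ n ih =>
    obtain ⟨ihA, ihM⟩ := ih
    have hA : {a : Atom d | a.len ≤ n + 1}.Finite := by
      apply Set.Finite.subset (Set.Finite.insert Atom.star
        (Set.Finite.image (fun p : Fin d × Mon d => Atom.op p.1 p.2)
          ((Set.finite_univ (α := Fin d)).prod ihM)))
      rintro (_ | ⟨i, v⟩) h
      · exact Set.mem_insert _ _
      · refine Set.mem_insert_of_mem _ ⟨(i, v), ⟨Set.mem_univ _, ?_⟩, rfl⟩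
        have : Atom.len (Atom.op i v) = 1 + v.len := rfl
        simp only [Set.mem_setOf_eq] at h ⊢
        omega
    refine ⟨hA, ?_⟩
    apply Set.Finite.subset ((hA.image Mon.single).union
      ((Set.Finite.image (fun p : Atom d × Mon d => Mon.cons p.1 p.2) (ihA.prod ihM))))
    rintro (⟨a⟩ | ⟨a, v⟩) h
    · exact Set.mem_union_left _ ⟨a, by simpa [Mon.len] using h, rfl⟩
    · refine Set.mem_union_right _ ⟨(a, v), ⟨?_, ?_⟩, rfl⟩ <;>
      · simp only [Set.mem_setOf_eq] at h ⊢
        have h1 := a.one_le_len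
        have h2 := v.one_le_len
        have : Mon.len (Mon.cons a v) = a.len + v.len := rfl
        omega

/-- the weight (exponent vector) of a monomial -/
noncomputable def wt (v : Mon d) : Option (Fin d) →₀ ℕ :=
  Finsupp.equivFunOnFinite.symm (fun o => o.elim v.deg v.mult)

theorem wt_apply (v : Mon d) (o : Option (Fin d)) : wt v o = o.elim v.deg v.mult := rfl

theorem wt_none (v : Mon d) : wt v none = v.deg := rfl

theorem wt_some (v : Mon d) (i : Fin d) : wt v (some i) = v.mult i := rfl

theorem wt_eq_iff {v : Mon d} {e : Option (Fin d) →₀ ℕ} :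
    wt v = e ↔ v.deg = e none ∧ v.mult = fun i => e (some i) := by
  constructor
  · rintro rfl
    exact ⟨rfl, rfl⟩
  · rintro ⟨h1, h2⟩
    ext o
    cases o with
    | none => exact h1
    | some i => rw [wt_some, h2]

theorem finite_wt (e : Option (Fin d) →₀ ℕ) : {v : Mon d | wt v = e}.Finite := by
  apply Set.Finite.subset (finite_len d (e none + ∑ i, e (some i))).2
  intro v hv
  simp only [Set.mem_setOf_eq] at hv ⊢
  rw [Mon.len_eq, ← wt_none v, hv]
  have : ∀ i, v.mult i = e (some i) := fun i => by rw [← wt_some v, hv]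
  simp [this]

end Aux
section GF

variable {d : ℕ}

/-- generating function of a family of (finite) types graded by exponents -/
noncomputable def gf (F : (Option (Fin d) →₀ ℕ) → Type) :
    MvPowerSeries (Option (Fin d)) ℚ :=
  fun e => (Nat.card (F e) : ℚ)

theorem coeff_gf (F : (Option (Fin d) →₀ ℕ) → Type) (e : Option (Fin d) →₀ ℕ) :
    MvPowerSeries.coeff e (gf F) = (Nat.card (F e) : ℚ) := rfl

theorem card_plift (p : Prop) [Decidable p] : Nat.card (PLift p) = if p then 1 else 0 := by
  split <;> rename_i h
  · have : Unique (PLift p) := ⟨⟨⟨h⟩⟩, fun a => Subsingleton.elim _ _⟩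
    exact Nat.card_unique
  · have : IsEmpty (PLift p) := ⟨fun a => h a.down⟩
    exact Nat.card_of_isEmpty

theorem nat_card_sigma {ι : Type} [Fintype ι] (F : ι → Type) [∀ i, Finite (F i)] :
    Nat.card (Σ i, F i) = ∑ i, Nat.card (F i) := by
  have : ∀ i, Fintype (F i) := fun i => Fintype.ofFinite _
  simp [Nat.card_eq_fintype_card, Fintype.card_sigma]

theorem gf_congr {F G : (Option (Fin d) →₀ ℕ) → Type} (h : ∀ e, F e ≃ G e) :
    gf F = gf G := by
  apply MvPowerSeries.ext
  intro e
  rw [coeff_gf, coeff_gf, Nat.card_congr (h e)]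

theorem gf_add (F G H : (Option (Fin d) →₀ ℕ) → Type)
    [∀ e, Finite (F e)] [∀ e, Finite (G e)]
    (h : ∀ e, H e ≃ (F e ⊕ G e)) : gf H = gf F + gf G := by
  apply MvPowerSeries.ext
  intro e
  rw [map_add, coeff_gf, coeff_gf, coeff_gf, Nat.card_congr (h e), Nat.card_sum]
  push_cast
  ring

theorem gf_mul (F G H : (Option (Fin d) →₀ ℕ) → Type)
    [∀ e, Finite (F e)] [∀ e, Finite (G e)]
    (h : ∀ e, H e ≃ Σ p : (Finset.HasAntidiagonal.antidiagonal e : Finset _), F p.val.1 × G p.val.2) :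
    gf H = gf F * gf G := by
  apply MvPowerSeries.ext
  intro e
  rw [MvPowerSeries.coeff_mul, coeff_gf, Nat.card_congr (h e), nat_card_sigma]
  rw [← Finset.sum_attach (Finset.HasAntidiagonal.antidiagonal e)
    (fun p => MvPowerSeries.coeff p.1 (gf F) * MvPowerSeries.coeff p.2 (gf G))]
  push_cast [Nat.card_prod]
  rfl

theorem gf_one :
    gf (fun e : Option (Fin d) →₀ ℕ => PLift (e = 0)) = 1 := by
  classical
  apply MvPowerSeries.ext
  intro e
  rw [coeff_gf, MvPowerSeries.coeff_one, card_plift]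
  split <;> simp_all

theorem gf_X (s : Option (Fin d)) :
    gf (fun e => PLift (e = Finsupp.single s 1)) = MvPowerSeries.X s := by
  classical
  apply MvPowerSeries.ext
  intro e
  rw [coeff_gf, card_plift]
  have : MvPowerSeries.X (R := ℚ) s = MvPowerSeries.monomial (Finsupp.single s 1) 1 := rfl
  rw [this, MvPowerSeries.coeff_monomial]
  split <;> simp_all

theorem gf_X_mul (s : Option (Fin d)) (F G : (Option (Fin d) →₀ ℕ) → Type)
    (h1 : ∀ e, Finsupp.single s 1 ≤ e → (G e ≃ F (e - Finsupp.single s 1)))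
    (h2 : ∀ e, ¬ Finsupp.single s 1 ≤ e → IsEmpty (G e)) :
    gf G = MvPowerSeries.X s * gf F := by
  classical
  apply MvPowerSeries.ext
  intro e
  have hX : MvPowerSeries.X (R := ℚ) s = MvPowerSeries.monomial (Finsupp.single s 1) 1 := rfl
  rw [coeff_gf, hX, MvPowerSeries.coeff_monomial_mul]
  split <;> rename_i h
  · rw [Nat.card_congr (h1 e h), one_mul, coeff_gf]
  · have := h2 e h
    rw [Nat.card_of_isEmpty]
    norm_num

end GF
section Fam

variable {d : ℕ}

theorem wt_cons (a : Atom d) (v : Mon d) :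
    wt (Mon.cons a v) = wt (Mon.single a) + wt v := by
  ext o
  cases o with
  | none => simp [wt_apply, Mon.deg]
  | some i => simp [wt_apply, Mon.mult]

theorem wt_single_star :
    wt (Mon.single (Atom.star : Atom d)) = Finsupp.single none 1 := by
  ext o
  cases o with
  | none => simp [wt_apply, Mon.deg, Atom.deg]
  | some i => simp [wt_apply, Mon.mult, Atom.mult, Finsupp.single_apply]

theorem wt_single_op (i : Fin d) (u : Mon d) :
    wt (Mon.single (Atom.op i u)) = Finsupp.single (some i) 1 + wt u := by
  ext o
  cases o with
  | none => simp [wt_apply, Mon.deg, Atom.deg, Finsupp.single_apply]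
  | some j =>
    show Mon.mult _ j = _
    simp only [Mon.mult, Atom.mult, Finsupp.add_apply, Finsupp.single_apply,
      Option.some.injEq, wt_some]

theorem wt_mul : ∀ v w : Mon d, wt (v.mul w) = wt v + wt w
  | .single a, w => wt_cons a w
  | .cons a v, w => by
    rw [Mon.mul, wt_cons, wt_mul v w, wt_cons, add_assoc]

theorem monCanon_single_iff {a : Atom d} :
    MonCanon (Mon.single a) ↔ AtomCanon a := by
  constructor
  · intro h; cases h; assumption
  · exact fun h => MonCanon.single a h

theorem monCanon_cons_iff {a : Atom d} {v : Mon d} :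
    MonCanon (Mon.cons a v) ↔ AtomCanon a ∧ MonCanon v := by
  constructor
  · intro h; cases h; exact ⟨by assumption, by assumption⟩
  · exact fun h => MonCanon.cons a v h.1 h.2

theorem atomCanon_op_iff {i : Fin d} {v : Mon d} :
    AtomCanon (Atom.op i v) ↔ MonCanon v ∧
      ∀ (j : Fin d) (w : Mon d), v = Mon.single (Atom.op j w) → i ≤ j := by
  constructor
  · intro h; cases h; exact ⟨by assumption, by assumption⟩
  · exact fun h => AtomCanon.op i v h.1 h.2

theorem canon_mul : ∀ v w : Mon d, MonCanon v → MonCanon w → MonCanon (v.mul w)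
  | .single a, w, hv, hw =>
    MonCanon.cons a w (monCanon_single_iff.mp hv) hw
  | .cons a v, w, hv, hw => by
    rw [Mon.mul]
    obtain ⟨h1, h2⟩ := monCanon_cons_iff.mp hv
    exact MonCanon.cons _ _ h1 (canon_mul v w h2 hw)

/-- whether a monomial is a single operator atom -/
def IsSingleOp (v : Mon d) : Prop := ∃ i u, v = Mon.single (Atom.op i u)

/-- whether a monomial is a single atom -/
def IsSingle (v : Mon d) : Prop := ∃ a, v = Mon.single a

theorem not_isSingleOp_star : ¬ IsSingleOp (Mon.single (Atom.star : Atom d)) := by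
  rintro ⟨i, u, h⟩
  injection h with h'
  cases h'

theorem not_isSingleOp_cons (a : Atom d) (v : Mon d) : ¬ IsSingleOp (Mon.cons a v) := by
  rintro ⟨i, u, h⟩
  cases h

theorem isSingleOp_op (i : Fin d) (u : Mon d) : IsSingleOp (Mon.single (Atom.op i u)) :=
  ⟨i, u, rfl⟩

/-- all canonical monomials -/
def AcF (d : ℕ) (e : Option (Fin d) →₀ ℕ) : Type :=
  {v : Mon d // MonCanon v ∧ wt v = e}

/-- canonical monomials that are a single operator atom -/
def SF (d : ℕ) (e : Option (Fin d) →₀ ℕ) : Type :=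
  {v : Mon d // (MonCanon v ∧ IsSingleOp v) ∧ wt v = e}

/-- canonical monomials that are not a single operator atom -/
def NF (d : ℕ) (e : Option (Fin d) →₀ ℕ) : Type :=
  {v : Mon d // (MonCanon v ∧ ¬ IsSingleOp v) ∧ wt v = e}

/-- canonical monomials that are a single atom -/
def TF (d : ℕ) (e : Option (Fin d) →₀ ℕ) : Type :=
  {v : Mon d // (MonCanon v ∧ IsSingle v) ∧ wt v = e}

/-- the unit `u` family -/
abbrev UF (d : ℕ) (e : Option (Fin d) →₀ ℕ) : Type :=
  PLift (e = Finsupp.single (none : Option (Fin d)) 1)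

instance (e : Option (Fin d) →₀ ℕ) : Finite (AcF d e) :=
  Set.Finite.to_subtype ((finite_wt e).subset (fun v hv => hv.2))

instance (e : Option (Fin d) →₀ ℕ) : Finite (SF d e) :=
  Set.Finite.to_subtype ((finite_wt e).subset (fun v hv => hv.2))

instance (e : Option (Fin d) →₀ ℕ) : Finite (NF d e) :=
  Set.Finite.to_subtype ((finite_wt e).subset (fun v hv => hv.2))

instance (e : Option (Fin d) →₀ ℕ) : Finite (TF d e) :=
  Set.Finite.to_subtype ((finite_wt e).subset (fun v hv => hv.2))

instance (e : Option (Fin d) →₀ ℕ) : Finite (UF d e) := by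
  unfold UF; infer_instance

end Fam
section Chain

variable {d : ℕ}

/-- nested application of a chain of operators -/
def ops : List (Fin d) → Mon d → Mon d
  | [], w => w
  | i :: l, w => .single (.op i (ops l w))

/-- weight of a list of operators -/
noncomputable def lwt (l : List (Fin d)) : Option (Fin d) →₀ ℕ :=
  (l.map (fun i => Finsupp.single (some i) 1)).sum

theorem lwt_nil : lwt ([] : List (Fin d)) = 0 := rfl

theorem lwt_cons (i : Fin d) (l : List (Fin d)) :
    lwt (i :: l) = Finsupp.single (some i) 1 + lwt l := by
  simp [lwt]

theorem wt_ops : ∀ (l : List (Fin d)) (w : Mon d), wt (ops l w) = lwt l + wt w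
  | [], w => by rw [ops, lwt_nil, zero_add]
  | i :: l, w => by
    rw [ops, wt_single_op, wt_ops l w, lwt_cons, add_assoc]

theorem length_lwt : ∀ l : List (Fin d), l.length = ∑ o, lwt l o
  | [] => by simp [lwt_nil]
  | i :: l => by
    rw [List.length_cons, lwt_cons, length_lwt l]
    simp only [Finsupp.add_apply, Finset.sum_add_distrib]
    simp [Finsupp.single_apply, add_comm]

theorem canon_ops : ∀ (l : List (Fin d)) (w : Mon d), l.Pairwise (· ≤ ·) →
    MonCanon w → ¬ IsSingleOp w → MonCanon (ops l w)
  | [], w, _, hw, _ => hw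
  | i :: l, w, hs, hw, hw2 => by
    rw [ops]
    rw [List.pairwise_cons] at hs
    refine MonCanon.single _ (AtomCanon.op i _ (canon_ops l w hs.2 hw hw2) ?_)
    intro j u hj
    cases l with
    | nil => rw [ops] at hj; exact absurd (⟨j, u, hj⟩ : IsSingleOp w) hw2
    | cons k l' =>
      rw [ops] at hj
      injection hj with h'
      injection h' with h1 h2
      exact h1 ▸ hs.1 k (List.mem_cons_self)

theorem ops_inj : ∀ (l l' : List (Fin d)) (w w' : Mon d), ¬ IsSingleOp w → ¬ IsSingleOp w' →
    ops l w = ops l' w' → l = l' ∧ w = w'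
  | [], [], w, w', _, _, h => ⟨rfl, h⟩
  | [], j :: l', w, w', hw, _, h => by
    rw [ops, ops] at h
    exact absurd ⟨j, ops l' w', h⟩ hw
  | i :: l, [], w, w', _, hw', h => by
    rw [ops, ops] at h
    exact absurd ⟨i, ops l w, h.symm⟩ hw'
  | i :: l, j :: l', w, w', hw, hw', h => by
    rw [ops, ops] at h
    injection h with h'
    injection h' with h1 h2
    obtain ⟨h3, h4⟩ := ops_inj l l' w w' hw hw' h2
    exact ⟨by rw [h1, h3], h4⟩

theorem decomp : ∀ (n : ℕ) (v : Mon d), v.len ≤ n → MonCanon v →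
    ∃ (l : List (Fin d)) (w : Mon d), l.Pairwise (· ≤ ·) ∧ MonCanon w ∧ ¬ IsSingleOp w ∧
      v = ops l w := by
  intro n
  induction n with
  | zero => intro v hv _; exact absurd (le_trans v.one_le_len hv) (by norm_num)
  | succ n ih =>
    intro v hv hc
    match v with
    | .single (.op i u) =>
      obtain ⟨hu, hle⟩ := atomCanon_op_iff.mp (monCanon_single_iff.mp hc)
      have hlen : u.len ≤ n := by
        have : Mon.len (Mon.single (Atom.op i u)) = 1 + u.len := rfl
        omega
      obtain ⟨l, w, hs, hwc, hwn, heq⟩ := ih u hlen hu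
      refine ⟨i :: l, w, ?_, hwc, hwn, by rw [ops, heq]⟩
      rw [List.pairwise_cons]
      refine ⟨?_, hs⟩
      intro b hb
      match l, hb with
      | k :: l', hb =>
        have hik : i ≤ k := by
          apply hle k (ops l' w)
          rw [heq, ops]
        rcases List.mem_cons.mp hb with h | h
        · rwa [h]
        · exact le_trans hik ((List.pairwise_cons.mp hs).1 b h)
    | .single .star =>
      exact ⟨[], _, List.Pairwise.nil, hc, not_isSingleOp_star, rfl⟩
    | .cons a u =>
      exact ⟨[], _, List.Pairwise.nil, hc, not_isSingleOp_cons a u, rfl⟩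

/-- sorted operator chains with all indices at least `k` -/
def ChF (d k : ℕ) (e : Option (Fin d) →₀ ℕ) : Type :=
  {l : List (Fin d) // (l.Pairwise (· ≤ ·) ∧ ∀ i ∈ l, k ≤ i.val) ∧ lwt l = e}

instance (k : ℕ) (e : Option (Fin d) →₀ ℕ) : Finite (ChF d k e) :=
  Set.Finite.to_subtype (Set.Finite.subset (List.finite_length_eq (Fin d) (∑ o, e o))
    (fun l hl => by
      simp only [Set.mem_setOf_eq] at hl ⊢
      rw [length_lwt, hl.2]))

end Chain
section ChainGF

variable {d : ℕ}

/-- chains in `ChF d k` that start with the operator `j` (with `j` removed from the weight) -/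
def DF (d k : ℕ) (j : Fin d) (e : Option (Fin d) →₀ ℕ) : Type :=
  {l : List (Fin d) // ((j :: l).Pairwise (· ≤ ·) ∧ ∀ i ∈ (j :: l), k ≤ i.val) ∧ lwt (j :: l) = e}

instance (k : ℕ) (j : Fin d) (e : Option (Fin d) →₀ ℕ) : Finite (DF d k j e) :=
  Set.Finite.to_subtype (Set.Finite.subset (List.finite_length_le (Fin d) (∑ o, e o))
    (fun l hl => by
      simp only [Set.mem_setOf_eq] at hl ⊢
      have := length_lwt (j :: l)
      rw [hl.2, List.length_cons] at this
      omega))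

theorem gf_chain_base : gf (ChF d d) = 1 := by
  rw [← gf_one]
  apply gf_congr
  intro e
  apply Equiv.symm
  apply Equiv.ofBijective (f := fun x : PLift (e = 0) =>
    (⟨[], ⟨⟨List.Pairwise.nil, by simp⟩, by rw [lwt_nil, x.down]⟩⟩ : ChF d d e))
  constructor
  · exact fun x y _ => Subsingleton.elim x y
  · rintro ⟨l, hl⟩
    match l, hl with
    | [], hl => exact ⟨⟨by rw [← hl.2, lwt_nil]⟩, Subtype.ext rfl⟩
    | i :: t, hl => exact absurd (hl.1.2 i (List.mem_cons_self)) (by have := i.isLt; omega)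

theorem gf_chain_rec (k : ℕ) (hk : k < d) :
    gf (ChF d k) = gf (ChF d (k + 1))
      + MvPowerSeries.X (some (⟨k, hk⟩ : Fin d)) * gf (ChF d k) := by
  set j : Fin d := ⟨k, hk⟩ with hj
  have hDF : gf (DF d k j) = MvPowerSeries.X (some j) * gf (ChF d k) := by
    apply gf_X_mul
    · intro e he
      refine ⟨fun x => ⟨x.1, ⟨⟨(List.pairwise_cons.mp x.2.1.1).2,
          fun i hi => x.2.1.2 i (List.mem_cons_of_mem j hi)⟩, ?_⟩⟩,
        fun x => ⟨x.1, ⟨⟨List.pairwise_cons.mpr ⟨fun b hb => ?_, x.2.1.1⟩, ?_⟩, ?_⟩⟩,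
        fun x => Subtype.ext rfl, fun x => Subtype.ext rfl⟩
      · have h2 := x.2.2
        rw [lwt_cons] at h2
        ext o
        have h3 := DFunLike.congr_fun h2 o
        simp only [Finsupp.add_apply] at h3
        rw [Finsupp.tsub_apply]
        omega
      · rw [Fin.le_def]
        exact x.2.1.2 b hb
      · intro i hi
        rcases List.mem_cons.mp hi with h | h
        · subst h; exact le_refl _
        · exact x.2.1.2 i h
      · rw [lwt_cons, x.2.2, add_tsub_cancel_of_le he]
    · intro e he
      constructor
      rintro ⟨l, hl⟩
      apply he
      rw [← hl.2, lwt_cons]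
      exact self_le_add_right _ _
  rw [← hDF]
  apply gf_add
  intro e
  apply Equiv.symm
  apply Equiv.ofBijective (f := fun x : ChF d (k + 1) e ⊕ DF d k j e =>
    match x with
    | .inl ⟨l, hl⟩ => (⟨l, ⟨⟨hl.1.1, fun i hi => le_trans (Nat.le_succ k) (hl.1.2 i hi)⟩,
        hl.2⟩⟩ : ChF d k e)
    | .inr ⟨l, hl⟩ => (⟨j :: l, hl⟩ : ChF d k e))
  constructor
  · rintro (⟨l, hl⟩ | ⟨l, hl⟩) (⟨l', hl'⟩ | ⟨l', hl'⟩) hxy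
    · have h' : l = l' := congrArg Subtype.val hxy
      subst h'; rfl
    · exfalso
      have h' : l = j :: l' := congrArg Subtype.val hxy
      have := hl.1.2 j (by rw [h']; exact List.mem_cons_self)
      simp [hj] at this
    · exfalso
      have h' : j :: l = l' := congrArg Subtype.val hxy
      have := hl'.1.2 j (by rw [← h']; exact List.mem_cons_self)
      simp [hj] at this
    · have h' : j :: l = j :: l' := congrArg Subtype.val hxy
      injection h' with _ h2
      subst h2; rfl
  · rintro ⟨l, hl⟩
    match l, hl with
    | [], hl =>
      exact ⟨.inl ⟨[], ⟨⟨List.Pairwise.nil, by simp⟩, hl.2⟩⟩, Subtype.ext rfl⟩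
    | h :: t, hl =>
      by_cases hhj : h = j
      · subst hhj
        exact ⟨.inr ⟨t, hl⟩, Subtype.ext rfl⟩
      · refine ⟨.inl ⟨h :: t, ⟨⟨hl.1.1, ?_⟩, hl.2⟩⟩, Subtype.ext rfl⟩
        intro i hi
        have hh : k + 1 ≤ h.val := by
          have h1 := hl.1.2 h (List.mem_cons_self)
          rcases Nat.lt_or_ge k h.val with h2 | h2
          · omega
          · exfalso
            apply hhj
            apply Fin.ext
            have hjv : (j : Fin d).val = k := rfl
            omega
        rcases List.mem_cons.mp hi with h3 | h3
        · subst h3; exact hh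
        · have := (List.pairwise_cons.mp hl.1.1).1 i h3
          rw [Fin.le_def] at this
          omega

theorem gf_chain_prod : ∀ m k : ℕ, k + m = d →
    gf (ChF d k) * ∏ i ∈ Finset.univ.filter (fun i : Fin d => k ≤ i.val),
      (1 - MvPowerSeries.X (some i)) = 1 := by
  intro m
  induction m with
  | zero =>
    intro k hk
    subst hk
    rw [show Finset.univ.filter (fun i : Fin (k + 0) => k ≤ i.val) = ∅ by
      apply Finset.filter_false_of_mem
      intro i _
      have := i.isLt
      omega]
    rw [Finset.prod_empty, mul_one]
    exact gf_chain_base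
  | succ m ih =>
    intro k hk
    have hklt : k < d := by omega
    have ihk := ih (k + 1) (by omega)
    set j : Fin d := ⟨k, hklt⟩ with hj
    have hfil : Finset.univ.filter (fun i : Fin d => k ≤ i.val)
        = insert j (Finset.univ.filter (fun i : Fin d => k + 1 ≤ i.val)) := by
      ext i
      simp only [Finset.mem_filter, Finset.mem_univ, true_and, Finset.mem_insert]
      constructor
      · intro h
        rcases Nat.lt_or_ge k i.val with h2 | h2
        · right; omega
        · left; exact Fin.ext (by simp [hj]; omega)
      · rintro (h | h)
        · subst h; simp [hj]
        · omega
    have hnotmem : j ∉ Finset.univ.filter (fun i : Fin d => k + 1 ≤ i.val) := by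
      simp [hj]
    rw [hfil, Finset.prod_insert hnotmem]
    have hrec := gf_chain_rec k hklt
    rw [show (⟨k, hklt⟩ : Fin d) = j from rfl] at hrec
    have key : gf (ChF d k) * (1 - MvPowerSeries.X (some j)) = gf (ChF d (k + 1)) := by
      linear_combination hrec
    calc gf (ChF d k) * ((1 - MvPowerSeries.X (some j)) * ∏ i ∈ Finset.univ.filter
          (fun i : Fin d => k + 1 ≤ i.val), (1 - MvPowerSeries.X (some i)))
        = (gf (ChF d k) * (1 - MvPowerSeries.X (some j))) * ∏ i ∈ Finset.univ.filter
          (fun i : Fin d => k + 1 ≤ i.val), (1 - MvPowerSeries.X (some i)) := by ring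
      _ = 1 := by rw [key]; exact ihk

end ChainGF
section Bij

variable {d : ℕ}

open Finset in
/-- split off the first atom of a canonical monomial -/
def M1F (d : ℕ) (e : Option (Fin d) →₀ ℕ) : Type :=
  Σ p : (Finset.HasAntidiagonal.antidiagonal e : Finset _), TF d p.val.1 × AcF d p.val.2

/-- maximal chain decomposition -/
def M3F (d : ℕ) (e : Option (Fin d) →₀ ℕ) : Type :=
  Σ p : (Finset.HasAntidiagonal.antidiagonal e : Finset _), ChF d 0 p.val.1 × NF d p.val.2

instance (e : Option (Fin d) →₀ ℕ) : Finite (M1F d e) := by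
  unfold M1F; infer_instance

instance (e : Option (Fin d) →₀ ℕ) : Finite (M3F d e) := by
  unfold M3F; infer_instance

noncomputable def equiv_E3 (e : Option (Fin d) →₀ ℕ) : AcF d e ≃ (SF d e ⊕ NF d e) := by
  apply Equiv.symm
  apply Equiv.ofBijective (f := fun x : SF d e ⊕ NF d e =>
    match x with
    | .inl ⟨v, h⟩ => (⟨v, h.1.1, h.2⟩ : AcF d e)
    | .inr ⟨v, h⟩ => (⟨v, h.1.1, h.2⟩ : AcF d e))
  constructor
  · rintro (⟨v, hv⟩ | ⟨v, hv⟩) (⟨v', hv'⟩ | ⟨v', hv'⟩) hxy <;>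
      have h' : v = v' := congrArg Subtype.val hxy
    · subst h'; rfl
    · exact absurd (h' ▸ hv.1.2) hv'.1.2
    · exact absurd (h'.symm ▸ hv'.1.2) hv.1.2
    · subst h'; rfl
  · rintro ⟨v, hv, hw⟩
    by_cases h : IsSingleOp v
    · exact ⟨.inl ⟨v, ⟨hv, h⟩, hw⟩, rfl⟩
    · exact ⟨.inr ⟨v, ⟨hv, h⟩, hw⟩, rfl⟩

noncomputable def equiv_T (e : Option (Fin d) →₀ ℕ) : TF d e ≃ (UF d e ⊕ SF d e) := by
  apply Equiv.symm
  apply Equiv.ofBijective (f := fun x : UF d e ⊕ SF d e =>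
    match x with
    | .inl ⟨h⟩ => (⟨Mon.single Atom.star, ⟨MonCanon.single _ AtomCanon.star, ⟨_, rfl⟩⟩,
        by rw [wt_single_star]; exact h.symm⟩ : TF d e)
    | .inr ⟨v, h⟩ => (⟨v, ⟨h.1.1, by obtain ⟨i, u, rfl⟩ := h.1.2; exact ⟨_, rfl⟩⟩, h.2⟩ : TF d e))
  constructor
  · rintro (⟨hx⟩ | ⟨vx, ⟨hvc, ix, ux, rfl⟩, hvw⟩) (⟨hy⟩ | ⟨vy, ⟨hvc', iy, uy, rfl⟩, hvw'⟩) hxy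
    · exact congrArg Sum.inl (Subsingleton.elim hx hy)
    · exfalso
      have h' : Mon.single Atom.star = Mon.single (Atom.op iy uy) := congrArg Subtype.val hxy
      injection h' with h''
      cases h''
    · exfalso
      have h' : Mon.single (Atom.op ix ux) = Mon.single Atom.star := congrArg Subtype.val hxy
      injection h' with h''
      cases h''
    · have h' : Mon.single (Atom.op ix ux) = Mon.single (Atom.op iy uy) :=
        congrArg Subtype.val hxy
      injection h' with h''
      injection h'' with h1 h2
      subst h1; subst h2; rfl
  · rintro ⟨v, ⟨hvc, a, rfl⟩, hvw⟩
    match a with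
    | .star => exact ⟨.inl ⟨by rw [← hvw, wt_single_star]⟩, Subtype.ext rfl⟩
    | .op i u => exact ⟨.inr ⟨_, ⟨hvc, ⟨i, u, rfl⟩⟩, hvw⟩, Subtype.ext rfl⟩

noncomputable def equiv_E1 (e : Option (Fin d) →₀ ℕ) :
    AcF d e ≃ ((UF d e ⊕ SF d e) ⊕ M1F d e) := by
  classical
  apply Equiv.symm
  apply Equiv.ofBijective (f := fun x : (UF d e ⊕ SF d e) ⊕ M1F d e =>
    match x with
    | .inl (.inl ⟨h⟩) => (⟨Mon.single Atom.star, MonCanon.single _ AtomCanon.star,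
        by rw [wt_single_star]; exact h.symm⟩ : AcF d e)
    | .inl (.inr ⟨v, h⟩) => (⟨v, h.1.1, h.2⟩ : AcF d e)
    | .inr ⟨p, x, y⟩ => (⟨x.1.mul y.1, canon_mul _ _ x.2.1.1 y.2.1,
        by rw [wt_mul, x.2.2, y.2.2]; exact Finset.HasAntidiagonal.mem_antidiagonal.mp p.2⟩ : AcF d e))
  constructor
  · rintro ((⟨hx⟩ | ⟨vx, ⟨hvc, ix, ux, rfl⟩, hvw⟩) |
        ⟨⟨⟨ex1, ex2⟩, hpx⟩, ⟨tx, ⟨htxc, ax, rfl⟩, htxw⟩, ⟨wx, hwxc, hwxw⟩⟩)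
      ((⟨hy⟩ | ⟨vy, ⟨hvc', iy, uy, rfl⟩, hvw'⟩) |
        ⟨⟨⟨ey1, ey2⟩, hpy⟩, ⟨ty, ⟨htyc, ay, rfl⟩, htyw⟩, ⟨wy, hwyc, hwyw⟩⟩) hxy <;>
      have h' := congrArg Subtype.val hxy
    · exact congrArg (fun z => Sum.inl (Sum.inl z)) (Subsingleton.elim hx hy)
    · exfalso
      have h'' : Mon.single Atom.star = Mon.single (Atom.op iy uy) := h'
      injection h'' with h3; cases h3
    · exfalso
      have h'' : Mon.single Atom.star = Mon.cons ay wy := h'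
      cases h''
    · exfalso
      have h'' : Mon.single (Atom.op ix ux) = Mon.single Atom.star := h'
      injection h'' with h3; cases h3
    · have h'' : Mon.single (Atom.op ix ux) = Mon.single (Atom.op iy uy) := h'
      injection h'' with h3
      injection h3 with h1 h2
      subst h1; subst h2; rfl
    · exfalso
      have h'' : Mon.single (Atom.op ix ux) = Mon.cons ay wy := h'
      cases h''
    · exfalso
      have h'' : Mon.cons ax wx = Mon.single Atom.star := h'
      cases h''
    · exfalso
      have h'' : Mon.cons ax wx = Mon.single (Atom.op iy uy) := h'
      cases h''
    · have h'' : Mon.cons ax wx = Mon.cons ay wy := h'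
      injection h'' with h1 h2
      subst h1; subst h2
      have he1 : ex1 = ey1 := htxw.symm.trans htyw
      have he2 : ex2 = ey2 := hwxw.symm.trans hwyw
      subst he1; subst he2
      rfl
  · rintro ⟨v, hv, hw⟩
    match v, hv, hw with
    | .single .star, hv, hw =>
      exact ⟨.inl (.inl ⟨by rw [← hw, wt_single_star]⟩), Subtype.ext rfl⟩
    | .single (.op i u), hv, hw =>
      exact ⟨.inl (.inr ⟨_, ⟨hv, ⟨i, u, rfl⟩⟩, hw⟩), Subtype.ext rfl⟩
    | .cons a w, hv, hw =>
      refine ⟨.inr ⟨⟨(wt (Mon.single a), wt w), ?_⟩,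
        ⟨Mon.single a, ⟨monCanon_single_iff.mpr (monCanon_cons_iff.mp hv).1, ⟨a, rfl⟩⟩, rfl⟩,
        ⟨w, (monCanon_cons_iff.mp hv).2, rfl⟩⟩, Subtype.ext rfl⟩
      rw [Finset.HasAntidiagonal.mem_antidiagonal, ← wt_cons]
      exact hw

noncomputable def equiv_E4 (e : Option (Fin d) →₀ ℕ) : AcF d e ≃ M3F d e := by
  classical
  apply Equiv.symm
  apply Equiv.ofBijective (f := fun x : M3F d e =>
    (⟨ops x.2.1.1 x.2.2.1, canon_ops _ _ x.2.1.2.1.1 x.2.2.2.1.1 x.2.2.2.1.2,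
      by rw [wt_ops, x.2.1.2.2, x.2.2.2.2]; exact Finset.HasAntidiagonal.mem_antidiagonal.mp x.1.2⟩ : AcF d e))
  constructor
  · rintro ⟨⟨⟨ex1, ex2⟩, hpx⟩, ⟨lx, hlx⟩, ⟨wx, hwx⟩⟩ ⟨⟨⟨ey1, ey2⟩, hpy⟩, ⟨ly, hly⟩, ⟨wy, hwy⟩⟩ hxy
    have h' : ops lx wx = ops ly wy := congrArg Subtype.val hxy
    obtain ⟨h1, h2⟩ := ops_inj lx ly wx wy hwx.1.2 hwy.1.2 h'
    subst h1; subst h2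
    have he1 : ex1 = ey1 := hlx.2.symm.trans hly.2
    have he2 : ex2 = ey2 := hwx.2.symm.trans hwy.2
    subst he1; subst he2
    rfl
  · rintro ⟨v, hv, hw⟩
    obtain ⟨l, w, hs, hwc, hwn, heq⟩ := decomp v.len v le_rfl hv
    refine ⟨⟨⟨(lwt l, wt w), ?_⟩, ⟨l, ⟨⟨hs, fun i _ => Nat.zero_le _⟩, rfl⟩⟩,
      ⟨w, ⟨hwc, hwn⟩, rfl⟩⟩, Subtype.ext heq.symm⟩
    rw [Finset.HasAntidiagonal.mem_antidiagonal, ← wt_ops, ← heq]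
    exact hw

end Bij
section Assemble

variable {d : ℕ}

theorem Ac_eq_gf (d : ℕ) : Ac d = gf (AcF d) := by
  apply MvPowerSeries.ext
  intro e
  rw [MvPowerSeries.coeff_apply, MvPowerSeries.coeff_apply]
  show ((ac d (e none) (fun i => e (some i)) : ℚ)) = ((Nat.card (AcF d e) : ℚ))
  congr 1
  apply Nat.card_congr
  exact Equiv.subtypeEquivRight (fun v => by rw [wt_eq_iff])

theorem gf_UF_eq : gf (UF d) = MvPowerSeries.X (none : Option (Fin d)) := gf_X none

theorem gf_E1 : gf (AcF d) = (gf (UF d) + gf (SF d)) + gf (TF d) * gf (AcF d) := by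
  have h1 : gf (AcF d) = gf (fun e => (UF d e ⊕ SF d e) ⊕ M1F d e) := gf_congr equiv_E1
  have h2 : gf (fun e => (UF d e ⊕ SF d e) ⊕ M1F d e)
      = gf (fun e => UF d e ⊕ SF d e) + gf (M1F d) :=
    gf_add _ _ _ (fun e => Equiv.refl _)
  have h3 : gf (fun e => UF d e ⊕ SF d e) = gf (UF d) + gf (SF d) :=
    gf_add _ _ _ (fun e => Equiv.refl _)
  have h4 : gf (M1F d) = gf (TF d) * gf (AcF d) :=
    gf_mul _ _ _ (fun e => Equiv.refl _)
  conv_lhs => rw [h1, h2, h3, h4]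

theorem gf_T : gf (TF d) = gf (UF d) + gf (SF d) :=
  gf_add _ _ _ equiv_T

theorem gf_E3 : gf (AcF d) = gf (SF d) + gf (NF d) :=
  gf_add _ _ _ equiv_E3

theorem gf_E4 : gf (AcF d) = gf (ChF d 0) * gf (NF d) :=
  (gf_congr equiv_E4).trans (gf_mul _ _ _ (fun e => Equiv.refl _))

theorem gf_E5 : gf (ChF d 0) * ∏ i : Fin d, (1 - MvPowerSeries.X (R := ℚ) (some i)) = 1 := by
  have h := gf_chain_prod (d := d) d 0 (by omega)
  rwa [show Finset.univ.filter (fun i : Fin d => 0 ≤ i.val) = Finset.univ from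
    Finset.filter_true_of_mem (fun _ _ => Nat.zero_le _)] at h

end Assemble
open MvPowerSeries in
/-- `A^c_d` satisfies `A^c_d = u + u·A^c_d + Δ(p)·(A^c_d + (A^c_d)²)`,
where `Δ(p) = 1 − (1−p₁)⋯(1−p_d)`. -/
theorem Ac_functional_equation (d : ℕ) (hd : 1 ≤ d) :
    Ac d = X (none : Option (Fin d)) + X (none : Option (Fin d)) * Ac d
        + (1 - ∏ i : Fin d, (1 - X (some i))) * (Ac d + (Ac d) ^ 2) := by
  rw [Ac_eq_gf]
  have h7 : (∏ i : Fin d, (1 - X (R := ℚ) (some i))) * gf (AcF d) = gf (NF d) := by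
    rw [gf_E4]
    calc (∏ i : Fin d, (1 - X (R := ℚ) (some i))) * (gf (ChF d 0) * gf (NF d))
        = (gf (ChF d 0) * ∏ i : Fin d, (1 - X (R := ℚ) (some i))) * gf (NF d) := by ring
      _ = gf (NF d) := by rw [gf_E5, one_mul]
  linear_combination gf_E1 (d := d) + gf (AcF d) * gf_T (d := d)
    + (1 + gf (AcF d)) * (h7 - gf_E3 (d := d) + gf_UF_eq (d := d))

end MultiOp
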